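/- Let ν = N(θ, Σ) with Σ positive definite, p ≥ 1, E ⊆ R^n, ε ≥ 0, and set A = {Σ^{-1/2}(x − θ) : x ∈ E} and η = ε / ||Σ^{1/2}||_p. Then ν(E_ε^{(ℓ_p)}) ≥ γ_n(A_η^{(ℓ_p)}), where expansions are taken in ℓ_p norm and ||Σ^{1/2}||_p is the induced matrix p-norm. -/

import Mathlib

open MeasureTheory ProbabilityTheory Matrix

noncomputable def lpNorm {n : ℕ} (p : ℝ) (x : Fin n → ℝ) : ℝ :=
  (∑ i, |x i| ^ p) ^ (1 / p)

def expand {n : ℕ} (p η : ℝ) (E : Set (Fin n → ℝ)) : Set (Fin n → ℝ) :=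
  {x | ∃ x' ∈ E, lpNorm p (x' - x) ≤ η}

noncomputable def stdGaussian (n : ℕ) : Measure (Fin n → ℝ) :=
  Measure.pi fun _ => gaussianReal 0 1

/-- The induced matrix p-norm `‖M‖_p = sup_{v ≠ 0} ‖Mv‖_p / ‖v‖_p`. -/
noncomputable def matLpNorm {n : ℕ} (p : ℝ) (M : Matrix (Fin n) (Fin n) ℝ) : ℝ :=
  ⨆ v ∈ {v : Fin n → ℝ | v ≠ 0}, lpNorm p (M.mulVec v) / lpNorm p v

lemma lpNorm_nonneg {n : ℕ} (p : ℝ) (x : Fin n → ℝ) : 0 ≤ lpNorm p x :=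
  Real.rpow_nonneg (Finset.sum_nonneg fun i _ => Real.rpow_nonneg (abs_nonneg _) p) _

lemma lpNorm_pos {n : ℕ} {p : ℝ} (hp : 0 < p) {x : Fin n → ℝ} (hx : x ≠ 0) :
    0 < lpNorm p x := by
  obtain ⟨j, hj⟩ := Function.ne_iff.1 hx
  have h1 : 0 < |x j| ^ p := Real.rpow_pos_of_pos (abs_pos.2 hj) p
  have h2 : |x j| ^ p ≤ ∑ i, |x i| ^ p :=
    Finset.single_le_sum (fun i _ => Real.rpow_nonneg (abs_nonneg _) p) (Finset.mem_univ j)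
  exact Real.rpow_pos_of_pos (h1.trans_le h2) _

lemma lpNorm_zero {n : ℕ} {p : ℝ} (hp : 0 < p) : lpNorm p (0 : Fin n → ℝ) = 0 := by
  simp [_root_.lpNorm, Real.zero_rpow hp.ne', one_div, Real.zero_rpow (inv_ne_zero hp.ne')]

lemma lpNorm_mulVec_le {n : ℕ} {p : ℝ} (hp : 1 ≤ p) (M : Matrix (Fin n) (Fin n) ℝ)
    (v : Fin n → ℝ) :
    lpNorm p (M.mulVec v) ≤ (∑ i, (∑ j, |M i j|) ^ p) ^ (1/p) * lpNorm p v := by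
  have hp0 : 0 < p := lt_of_lt_of_le one_pos hp
  set N := lpNorm p v with hNdef
  have hN : 0 ≤ N := lpNorm_nonneg p v
  have hvj : ∀ j, |v j| ≤ N := by
    intro j
    have h1 : |v j| ^ p ≤ ∑ i, |v i| ^ p :=
      Finset.single_le_sum (fun i _ => Real.rpow_nonneg (abs_nonneg _) p) (Finset.mem_univ j)
    have h2 : (|v j| ^ p) ^ (1/p) = |v j| := by
      rw [← Real.rpow_mul (abs_nonneg _), mul_one_div_cancel hp0.ne', Real.rpow_one]
    calc |v j| = (|v j| ^ p) ^ (1/p) := h2.symm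
      _ ≤ (∑ i, |v i| ^ p) ^ (1/p) :=
        Real.rpow_le_rpow (Real.rpow_nonneg (abs_nonneg _) p) h1 (by positivity)
  have hMvi : ∀ i, |M.mulVec v i| ≤ (∑ j, |M i j|) * N := by
    intro i
    calc |M.mulVec v i| = |∑ j, M i j * v j| := by
          simp [Matrix.mulVec, dotProduct]
      _ ≤ ∑ j, |M i j * v j| := Finset.abs_sum_le_sum_abs _ _
      _ = ∑ j, |M i j| * |v j| := by simp [abs_mul]
      _ ≤ ∑ j, |M i j| * N :=
          Finset.sum_le_sum fun j _ => mul_le_mul_of_nonneg_left (hvj j) (abs_nonneg _)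
      _ = (∑ j, |M i j|) * N := (Finset.sum_mul _ _ _).symm
  have hsum : ∑ i, |M.mulVec v i| ^ p ≤ ∑ i, ((∑ j, |M i j|) ^ p * N ^ p) := by
    refine Finset.sum_le_sum fun i _ => ?_
    rw [← Real.mul_rpow (Finset.sum_nonneg fun j _ => abs_nonneg _) hN]
    exact Real.rpow_le_rpow (abs_nonneg _) (hMvi i) hp0.le
  calc lpNorm p (M.mulVec v) = (∑ i, |M.mulVec v i| ^ p) ^ (1/p) := rfl
    _ ≤ (∑ i, ((∑ j, |M i j|) ^ p * N ^ p)) ^ (1/p) :=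
        Real.rpow_le_rpow (Finset.sum_nonneg fun i _ => Real.rpow_nonneg (abs_nonneg _) p)
          hsum (by positivity)
    _ = ((∑ i, (∑ j, |M i j|) ^ p) * N ^ p) ^ (1/p) := by rw [← Finset.sum_mul]
    _ = (∑ i, (∑ j, |M i j|) ^ p) ^ (1/p) * (N ^ p) ^ (1/p) := by
        rw [Real.mul_rpow (Finset.sum_nonneg fun i _ =>
          Real.rpow_nonneg (Finset.sum_nonneg fun j _ => abs_nonneg (M i j)) p)
          (Real.rpow_nonneg hN p)]
    _ = (∑ i, (∑ j, |M i j|) ^ p) ^ (1/p) * N := by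
        rw [← Real.rpow_mul hN, mul_one_div_cancel hp0.ne', Real.rpow_one]


lemma matLpNorm_nonneg {n : ℕ} (p : ℝ) (M : Matrix (Fin n) (Fin n) ℝ) :
    0 ≤ matLpNorm p M :=
  Real.iSup_nonneg fun v => Real.iSup_nonneg fun _ =>
    div_nonneg (lpNorm_nonneg _ _) (lpNorm_nonneg _ _)

lemma lpNorm_mulVec_le_matLpNorm {n : ℕ} {p : ℝ} (hp : 1 ≤ p)
    (M : Matrix (Fin n) (Fin n) ℝ) (v : Fin n → ℝ) :
    lpNorm p (M.mulVec v) ≤ matLpNorm p M * lpNorm p v := by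
  have hp0 : 0 < p := lt_of_lt_of_le one_pos hp
  rcases eq_or_ne v 0 with rfl | hv
  · simp [Matrix.mulVec_zero, lpNorm_zero hp0]
  · have hNv : 0 < lpNorm p v := lpNorm_pos hp0 hv
    set C : ℝ := (∑ i, (∑ j, |M i j|) ^ p) ^ (1/p) with hC
    have hbdd : BddAbove (Set.range fun w : Fin n → ℝ =>
        ⨆ (_ : w ∈ {v : Fin n → ℝ | v ≠ 0}), lpNorm p (M.mulVec w) / lpNorm p w) := by
      refine ⟨max C 0, ?_⟩
      rintro x ⟨w, rfl⟩
      refine Real.iSup_le (fun hw => ?_) (le_max_right _ _)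
      have hw' : w ≠ 0 := hw
      rw [div_le_iff₀ (lpNorm_pos hp0 hw')]
      calc lpNorm p (M.mulVec w) ≤ C * lpNorm p w := lpNorm_mulVec_le hp M w
        _ ≤ max C 0 * lpNorm p w :=
            mul_le_mul_of_nonneg_right (le_max_left _ _) (lpNorm_nonneg _ _)
    have h2 : lpNorm p (M.mulVec v) / lpNorm p v ≤
        ⨆ (_ : v ∈ {v : Fin n → ℝ | v ≠ 0}), lpNorm p (M.mulVec v) / lpNorm p v :=
      le_ciSup (f := fun _ : v ∈ {v : Fin n → ℝ | v ≠ 0} =>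
        lpNorm p (M.mulVec v) / lpNorm p v)
        ⟨lpNorm p (M.mulVec v) / lpNorm p v, by rintro x ⟨_, rfl⟩; exact le_rfl⟩ hv
    have h1 : (⨆ (_ : v ∈ {v : Fin n → ℝ | v ≠ 0}), lpNorm p (M.mulVec v) / lpNorm p v)
        ≤ matLpNorm p M := le_ciSup hbdd v
    have hratio := h2.trans h1
    calc lpNorm p (M.mulVec v)
        = (lpNorm p (M.mulVec v) / lpNorm p v) * lpNorm p v := by
          field_simp
      _ ≤ matLpNorm p M * lpNorm p v :=
          mul_le_mul_of_nonneg_right hratio hNv.le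

/-- With `ν = N(θ, Sig)`, `A = {Sig^{-1/2}(x-θ) : x ∈ E}` and
`η = ε / ‖Sig^{1/2}‖_p`, we have `ν(E_ε^{(ℓ_p)}) ≥ γₙ(A_η^{(ℓ_p)})`. -/
theorem gaussian_expansion_transfer {n : ℕ}
    (Sig sqrtSig invSqrtSig : Matrix (Fin n) (Fin n) ℝ)
    (hSig : Sig.PosDef) (hsqrt : sqrtSig * sqrtSig = Sig) (hsqrtPD : sqrtSig.PosDef)
    (hinv₁ : sqrtSig * invSqrtSig = 1) (hinv₂ : invSqrtSig * sqrtSig = 1)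
    (θ : Fin n → ℝ)
    (ν : Measure (Fin n → ℝ))
    (hν : ν = Measure.map (fun x => θ + sqrtSig.mulVec x) (stdGaussian n))
    (p : ℝ) (hp : 1 ≤ p) (E : Set (Fin n → ℝ)) (ε : ℝ) (hε : 0 ≤ ε)
    (A : Set (Fin n → ℝ)) (hA : A = (fun x => invSqrtSig.mulVec (x - θ)) '' E)
    (η : ℝ) (hη : η = ε / matLpNorm p sqrtSig) :
    ν (expand p ε E) ≥ (stdGaussian n) (expand p η A) := by
  have hf : Measurable (fun x : Fin n → ℝ => θ + sqrtSig.mulVec x) := by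
    have : Continuous (fun x : Fin n → ℝ => sqrtSig.mulVec x) :=
      LinearMap.continuous_of_finiteDimensional (Matrix.mulVecLin sqrtSig)
    exact (continuous_const.add this).measurable
  rw [hν, ge_iff_le]
  refine le_trans ?_ (Measure.le_map_apply hf.aemeasurable _)
  apply measure_mono
  rintro y ⟨a, haA, hay⟩
  rw [hA] at haA
  obtain ⟨x', hx'E, rfl⟩ := haA
  refine ⟨x', hx'E, ?_⟩
  have key : x' - (θ + sqrtSig.mulVec y)
      = sqrtSig.mulVec (invSqrtSig.mulVec (x' - θ) - y) := by
    rw [Matrix.mulVec_sub, Matrix.mulVec_mulVec, hinv₁, Matrix.one_mulVec]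
    abel
  rw [key]
  have hM0 : 0 ≤ matLpNorm p sqrtSig := matLpNorm_nonneg p sqrtSig
  calc lpNorm p (sqrtSig.mulVec (invSqrtSig.mulVec (x' - θ) - y))
      ≤ matLpNorm p sqrtSig * lpNorm p (invSqrtSig.mulVec (x' - θ) - y) :=
        lpNorm_mulVec_le_matLpNorm hp _ _
    _ ≤ matLpNorm p sqrtSig * η := mul_le_mul_of_nonneg_left hay hM0
    _ ≤ ε := by
        rw [hη]
        rcases hM0.eq_or_lt with h | h
        · rw [← h]; simpa using hε
        · rw [mul_div_cancel₀ ε h.ne']
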